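/- Let 𝒳, 𝒴, 𝒵 be finite alphabets, let 𝒜 be a convex subset of a real vector space ℝ^n, let g : 𝒳 × 𝒜 → ℝ, and let ψ : ℝ → ℝ be strictly increasing such that a ↦ ψ(g(x,a)) is concave on 𝒜 for every x ∈ 𝒳. Let p_{X,Y,Z} be a joint distribution forming a Markov chain X − Y − Z with strictly positive marginals p_X and p_Y. Then for every x ∈ 𝒳 and every decision rule δ : 𝒵 → 𝒜, Σ_z p_{Z|X}(z|x)·ψ(g(x, δ(z))) ≤ Σ_y p_{Y|X}(y|x)·ψ(g(x, Σ_z p_{Z|Y}(z|y)·δ(z))). -/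

import Mathlib

/-- Let `𝒜 ⊆ ℝⁿ` be convex, `g : 𝒳 × 𝒜 → ℝ`, and `ψ : ℝ → ℝ` strictly
increasing with `a ↦ ψ(g(x,a))` concave on `𝒜` for every `x`. If `p_{X,Y,Z}` forms a
Markov chain `X − Y − Z` with strictly positive marginals `p_X`, `p_Y`, then for every
`x` and every decision rule `δ : 𝒵 → 𝒜`,
`Σ_z p_{Z|X}(z|x)·ψ(g(x,δ(z))) ≤ Σ_y p_{Y|X}(y|x)·ψ(g(x, Σ_z p_{Z|Y}(z|y)·δ(z)))`. -/
theorem conditional_jensen_markov {𝒳 𝒴 𝒵 : Type*} [Fintype 𝒳] [Fintype 𝒴] [Fintype 𝒵]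
    {n : ℕ} (𝒜 : Set (Fin n → ℝ)) (hA : Convex ℝ 𝒜)
    (g : 𝒳 → (Fin n → ℝ) → ℝ)
    (ψ : ℝ → ℝ) (hψ : StrictMono ψ)
    (hgconc : ∀ x, ConcaveOn ℝ 𝒜 fun a => ψ (g x a))
    (p : 𝒳 → 𝒴 → 𝒵 → ℝ) (hp0 : ∀ x y z, 0 ≤ p x y z)
    (hp1 : ∑ x, ∑ y, ∑ z, p x y z = 1)
    (hpX : ∀ x, 0 < ∑ y, ∑ z, p x y z) (hpY : ∀ y, 0 < ∑ x, ∑ z, p x y z)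
    (hMarkov : ∀ x y z, p x y z * (∑ x', ∑ z', p x' y z') =
      (∑ z', p x y z') * (∑ x', p x' y z))
    (δ : 𝒵 → Fin n → ℝ) (hδ : ∀ z, δ z ∈ 𝒜) (x : 𝒳) :
    ∑ z, ((∑ y, p x y z) / (∑ y, ∑ z', p x y z')) * ψ (g x (δ z)) ≤
      ∑ y, ((∑ z, p x y z) / (∑ y', ∑ z', p x y' z')) *
        ψ (g x (∑ z, ((∑ x', p x' y z) / (∑ x', ∑ z', p x' y z')) • δ z)) := by

  have hSpos : (0:ℝ) < ∑ y, ∑ z, p x y z := hpX x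
  have key : ∀ z, (∑ y, p x y z) / (∑ y, ∑ z', p x y z') =
      ∑ y, ((∑ z', p x y z') / (∑ y, ∑ z', p x y z')) *
        ((∑ x', p x' y z) / (∑ x', ∑ z', p x' y z')) := by
    intro z
    rw [Finset.sum_div]
    refine Finset.sum_congr rfl fun y _ => ?_
    have hT : (0:ℝ) < ∑ x', ∑ z', p x' y z' := hpY y
    have hM := hMarkov x y z
    field_simp
    linear_combination hM
  have hqsum : ∀ y, ∑ z, (∑ x', p x' y z) / (∑ x', ∑ z', p x' y z') = 1 := by
    intro y
    have hT : (0:ℝ) < ∑ x', ∑ z', p x' y z' := hpY y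
    rw [← Finset.sum_div, Finset.sum_comm, div_self hT.ne']
  calc ∑ z, ((∑ y, p x y z) / (∑ y, ∑ z', p x y z')) * ψ (g x (δ z))
      = ∑ z, ∑ y, ((∑ z', p x y z') / (∑ y, ∑ z', p x y z')) *
          (((∑ x', p x' y z) / (∑ x', ∑ z', p x' y z')) * ψ (g x (δ z))) := by
        refine Finset.sum_congr rfl fun z _ => ?_
        rw [key z, Finset.sum_mul]
        exact Finset.sum_congr rfl fun y _ => (mul_assoc _ _ _)
    _ = ∑ y, ((∑ z', p x y z') / (∑ y, ∑ z', p x y z')) *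
          ∑ z, ((∑ x', p x' y z) / (∑ x', ∑ z', p x' y z')) * ψ (g x (δ z)) := by
        rw [Finset.sum_comm]
        exact Finset.sum_congr rfl fun y _ => (Finset.mul_sum _ _ _).symm
    _ ≤ ∑ y, ((∑ z', p x y z') / (∑ y, ∑ z', p x y z')) *
          ψ (g x (∑ z, ((∑ x', p x' y z) / (∑ x', ∑ z', p x' y z')) • δ z)) := by
        refine Finset.sum_le_sum fun y _ => ?_
        have hT : (0:ℝ) < ∑ x', ∑ z', p x' y z' := hpY y
        have hw : 0 ≤ (∑ z', p x y z') / (∑ y, ∑ z', p x y z') := by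
          apply div_nonneg _ hSpos.le
          exact Finset.sum_nonneg fun z' _ => hp0 x y z'
        refine mul_le_mul_of_nonneg_left ?_ hw
        have := (hgconc x).le_map_sum (t := Finset.univ)
          (w := fun z => (∑ x', p x' y z) / (∑ x', ∑ z', p x' y z'))
          (p := fun z => δ z)
          (fun z _ => div_nonneg (Finset.sum_nonneg fun x' _ => hp0 x' y z) hT.le)
          (hqsum y) (fun z _ => hδ z)
        simpa [smul_eq_mul] using this
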